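/- For integers n and Δ with 2 ≤ Δ ≤ n−1, the average eccentricity of the broom satisfies ecc(B(n,Δ)) = (1/n)·( ⌊(n−Δ+2)(3(n−Δ+2)−2)/4⌋ + (n−Δ+1)(Δ−2) ). -/

import Mathlib

open SimpleGraph

/-- The eccentricity of a vertex: the maximum distance from it to any other vertex. -/
noncomputable def eccentricity {V : Type*} [Fintype V] (G : SimpleGraph V) (v : V) : ℕ :=
  Finset.univ.sup fun u => G.dist v u

/-- The average eccentricity of a graph. -/
noncomputable def avgEcc {V : Type*} [Fintype V] (G : SimpleGraph V) : ℝ :=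
  (∑ v : V, (eccentricity G v : ℝ)) / (Fintype.card V : ℝ)

/-- The broom `B(n, Δ)`: a path `0 — 1 — ⋯ — (n-Δ)` together with `Δ-1` pendant
vertices `n-Δ+1, …, n-1` attached to the vertex `n-Δ`. -/
def broom (n Δ : ℕ) : SimpleGraph (Fin n) :=
  SimpleGraph.fromRel (fun i j =>
    ((i : ℕ) + 1 = (j : ℕ) ∧ (j : ℕ) ≤ n - Δ) ∨ ((i : ℕ) = n - Δ ∧ n - Δ < (j : ℕ)))

/-- `ecc (B(n,Δ)) = (⌊(n-Δ+2)(3(n-Δ+2)-2)/4⌋ + (n-Δ+1)(Δ-2)) / n` for `2 ≤ Δ ≤ n-1`.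
(Natural number division is floor division.) -/
lemma broom_adj {n Δ : ℕ} {i j : Fin n} : (broom n Δ).Adj i j ↔ (i : ℕ) ≠ (j : ℕ) ∧
    (((i:ℕ)+1 = (j:ℕ) ∧ (j:ℕ) ≤ n-Δ) ∨ ((i:ℕ) = n-Δ ∧ n-Δ < (j:ℕ)) ∨
     ((j:ℕ)+1 = (i:ℕ) ∧ (i:ℕ) ≤ n-Δ) ∨ ((j:ℕ) = n-Δ ∧ n-Δ < (i:ℕ))) := by
  simp only [broom, fromRel_adj, ne_eq, Fin.val_eq_val]
  tauto

lemma broom_walk_path {n Δ : ℕ} (k : ℕ) : ∀ (i j : Fin n), (i:ℕ) + k = (j:ℕ) → (j:ℕ) ≤ n - Δ →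
    ∃ p : (broom n Δ).Walk i j, p.length = k := by
  induction k with
  | zero =>
    intro i j hij hj
    have : i = j := Fin.ext (by omega)
    subst this; exact ⟨.nil, rfl⟩
  | succ k ih =>
    intro i j hij hj
    have hi1 : (i:ℕ)+1 < n := by have := j.isLt; omega
    have hadj : (broom n Δ).Adj i ⟨(i:ℕ)+1, hi1⟩ := by
      rw [broom_adj]; simp only [Fin.val_mk, true_and, and_true]; omega
    obtain ⟨q, hq⟩ := ih ⟨(i:ℕ)+1, hi1⟩ j (by simp only [Fin.val_mk, true_and, and_true]; omega) hj
    exact ⟨.cons hadj q, by simp [hq]⟩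

lemma broom_walk_ge {n Δ : ℕ} {u v : Fin n} (p : (broom n Δ).Walk u v) :
    min (u:ℕ) (n-Δ) ≤ min (v:ℕ) (n-Δ) + p.length ∧
      min (v:ℕ) (n-Δ) ≤ min (u:ℕ) (n-Δ) + p.length := by
  induction p with
  | nil => simp
  | cons h q ih =>
    rw [broom_adj] at h
    simp only [Walk.length_cons]
    omega

lemma broom_dist_path {n Δ : ℕ} {i j : Fin n} (hij : (i:ℕ) ≤ (j:ℕ)) (hj : (j:ℕ) ≤ n - Δ) :
    (broom n Δ).dist i j = (j:ℕ) - (i:ℕ) := by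
  obtain ⟨p, hp⟩ := broom_walk_path ((j:ℕ) - (i:ℕ)) i j (by omega) hj
  refine le_antisymm (hp ▸ SimpleGraph.dist_le p) ?_
  have hr : (broom n Δ).Reachable i j := ⟨p⟩
  obtain ⟨q, hq⟩ := hr.exists_walk_length_eq_dist
  have := broom_walk_ge q
  omega

lemma broom_dist_to_m {n Δ : ℕ} (hm : n - Δ < n) {i : Fin n} (hi : (i:ℕ) ≤ n - Δ) :
    (broom n Δ).dist i ⟨n-Δ, hm⟩ = n - Δ - (i:ℕ) := by
  have := broom_dist_path (n := n) (Δ := Δ) (i := i) (j := ⟨n-Δ, hm⟩)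
    (by simp only [Fin.val_mk, true_and, and_true]; omega) (by simp)
  simpa using this

lemma broom_pendant_nbr {n Δ : ℕ} {p x : Fin n} (hp : n - Δ < (p:ℕ))
    (h : (broom n Δ).Adj p x) : (x:ℕ) = n - Δ := by
  rw [broom_adj] at h; omega

lemma broom_reach {n Δ : ℕ} (hm : n - Δ < n) (v : Fin n) :
    (broom n Δ).Reachable v ⟨n-Δ, hm⟩ := by
  rcases le_or_gt (v:ℕ) (n-Δ) with h | h
  · obtain ⟨p, _⟩ := broom_walk_path (n := n) (Δ := Δ) (n-Δ-(v:ℕ)) v ⟨n-Δ, hm⟩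
      (by simp only [Fin.val_mk, true_and, and_true]; omega) (by simp only [Fin.val_mk]; omega)
    exact ⟨p⟩
  · have hadj : (broom n Δ).Adj ⟨n-Δ, hm⟩ v := by
      rw [broom_adj]; simp only [Fin.val_mk, true_and, and_true]; omega
    exact hadj.reachable.symm

lemma broom_dist_pendant {n Δ : ℕ} (hm : n - Δ < n) {v p : Fin n} (hp : n - Δ < (p:ℕ))
    (hvp : v ≠ p) :
    (broom n Δ).dist v p = (broom n Δ).dist v ⟨n-Δ, hm⟩ + 1 := by
  have hadj : (broom n Δ).Adj ⟨n-Δ, hm⟩ p := by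
    rw [broom_adj]; simp only [Fin.val_mk, true_and, and_true]; omega
  obtain ⟨q, hq⟩ := (broom_reach hm v).exists_walk_length_eq_dist
  have key : ∀ (w' : (broom n Δ).Walk p v), (broom n Δ).dist ⟨n-Δ, hm⟩ v + 1 ≤ w'.length := by
    intro w'
    cases w' with
    | nil => exact absurd rfl hvp.symm
    | cons h q' =>
      rename_i x
      have hx : x = ⟨n-Δ, hm⟩ := Fin.ext (by simpa using broom_pendant_nbr hp h)
      subst hx
      have := SimpleGraph.dist_le q'
      simp only [Walk.length_cons]
      omega
  refine le_antisymm ?_ ?_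
  · have := SimpleGraph.dist_le (q.concat hadj)
    rw [Walk.length_concat] at this
    omega
  · have hr : (broom n Δ).Reachable v p := (broom_reach hm v).trans hadj.reachable
    obtain ⟨w, hw⟩ := hr.exists_walk_length_eq_dist
    have h2 := key w.reverse
    rw [Walk.length_reverse] at h2
    have h3 := SimpleGraph.dist_comm (G := broom n Δ) (u := v) (v := ⟨n-Δ, hm⟩)
    omega


lemma broom_ecc_path {n Δ : ℕ} (hm2 : n - Δ + 2 ≤ n) {i : Fin n} (hi : (i:ℕ) ≤ n - Δ) :
    eccentricity (broom n Δ) i = max (i:ℕ) (n - Δ + 1 - (i:ℕ)) := by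
  have hm : n - Δ < n := by omega
  apply le_antisymm
  · apply Finset.sup_le
    intro u _
    rcases le_or_gt (u:ℕ) (n-Δ) with hu | hu
    · rcases le_or_gt (i:ℕ) (u:ℕ) with h | h
      · rw [broom_dist_path h hu]; omega
      · rw [SimpleGraph.dist_comm, broom_dist_path h.le hi]; omega
    · have hne : i ≠ u := fun e => absurd (congrArg Fin.val e) (by omega)
      rw [broom_dist_pendant hm hu hne, broom_dist_to_m hm hi]; omega
  · have h0 : (0:ℕ) < n := by omega
    have e0 : (broom n Δ).dist i ⟨0, h0⟩ = (i:ℕ) := by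
      rw [SimpleGraph.dist_comm]
      have := broom_dist_path (n := n) (Δ := Δ) (i := ⟨0, h0⟩) (j := i)
        (by simp) (by omega)
      simpa using this
    have hm1 : n - Δ + 1 < n := by omega
    have ep : (broom n Δ).dist i ⟨n-Δ+1, hm1⟩ = n - Δ - (i:ℕ) + 1 := by
      rw [broom_dist_pendant hm (by simp only [Fin.val_mk]; omega)
        (fun e => absurd (congrArg Fin.val e) (by simp only [Fin.val_mk]; omega)),
        broom_dist_to_m hm hi]
    apply max_le
    · exact e0 ▸ Finset.le_sup (Finset.mem_univ _)
    · calc n - Δ + 1 - (i:ℕ) ≤ (broom n Δ).dist i ⟨n-Δ+1, hm1⟩ := by rw [ep]; omega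
        _ ≤ _ := Finset.le_sup (Finset.mem_univ _)

lemma broom_ecc_pendant {n Δ : ℕ} (hm2 : n - Δ + 2 ≤ n) (h1 : 1 ≤ n - Δ) {p : Fin n}
    (hp : n - Δ < (p:ℕ)) :
    eccentricity (broom n Δ) p = n - Δ + 1 := by
  have hm : n - Δ < n := by omega
  have hdm : (broom n Δ).dist p ⟨n-Δ, hm⟩ = 1 := by
    rw [SimpleGraph.dist_comm,
      broom_dist_pendant hm hp (fun e => absurd (congrArg Fin.val e) (by simp only [Fin.val_mk]; omega)),
      broom_dist_to_m hm (le_refl _)]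
    simp
  apply le_antisymm
  · apply Finset.sup_le
    intro u _
    by_cases hup : u = p
    · subst hup; rw [SimpleGraph.dist_self]; omega
    · rcases le_or_gt (u:ℕ) (n-Δ) with hu | hu
      · rw [SimpleGraph.dist_comm, broom_dist_pendant hm hp hup, broom_dist_to_m hm hu]
        omega
      · have hne : p ≠ u := fun e => hup e.symm
        rw [broom_dist_pendant hm hu hne, hdm]
        omega
  · have h0 : (0:ℕ) < n := by omega
    have hne : (⟨0, h0⟩ : Fin n) ≠ p := fun e => absurd (congrArg Fin.val e) (by simp only [Fin.val_mk]; omega)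
    have e0 : (broom n Δ).dist p ⟨0, h0⟩ = n - Δ + 1 := by
      rw [SimpleGraph.dist_comm, broom_dist_pendant hm hp hne,
        broom_dist_to_m hm (by simp only [Fin.val_mk]; omega)]
      simp only [Fin.val_mk]
      omega
    exact e0 ▸ Finset.le_sup (Finset.mem_univ _)

lemma sum_max_range (N : ℕ) :
    4 * (∑ a ∈ Finset.range (N+1), max a (N+1-a)) + N % 2 = 3*(N*N) + 6*N + 4 := by
  induction N with
  | zero => simp
  | succ N ih =>
    have hstep : ∑ a ∈ Finset.range (N+2), max a (N+2-a)
        = (∑ a ∈ Finset.range (N+1), max a (N+1-a)) + ((N+1)/2 + 1) + (N+1) := by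
      rw [Finset.sum_range_succ]
      have h1 : ∀ a ∈ Finset.range (N+1),
          max a (N+2-a) = max a (N+1-a) + (if 2*a ≤ N+1 then 1 else 0) := by
        intro a ha; rw [Finset.mem_range] at ha; split_ifs with h <;> omega
      rw [Finset.sum_congr rfl h1, Finset.sum_add_distrib]
      have h3 : (Finset.range (N+1)).filter (fun a => 2*a ≤ N+1)
          = Finset.range ((N+1)/2 + 1) := by
        ext x; simp only [Finset.mem_filter, Finset.mem_range]; omega
      have h2 : ∑ a ∈ Finset.range (N+1), (if 2*a ≤ N+1 then (1:ℕ) else 0)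
          = (N+1)/2 + 1 := by
        rw [← Finset.sum_filter, h3, Finset.sum_const, Finset.card_range, smul_eq_mul, mul_one]
      rw [h2]
      omega
    rw [hstep]
    have hr1 : 3*((N+1)*(N+1)) = 3*(N*N) + 6*N + 3 := by ring
    rw [hr1]
    generalize N*N = M at ih ⊢
    omega

theorem avgEcc_broom_formula {n Δ : ℕ} (hΔ : 2 ≤ Δ) (hΔn : Δ ≤ n - 1) :
    avgEcc (broom n Δ) =
      ((((n - Δ + 2) * (3 * (n - Δ + 2) - 2) / 4 + (n - Δ + 1) * (Δ - 2) : ℕ) : ℝ)) / n := by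
  set m := n - Δ with hmdef
  have hm2 : m + 2 ≤ n := by omega
  have h1 : 1 ≤ m := by omega
  set g : ℕ → ℕ := fun a => if a ≤ m then max a (m+1-a) else m+1 with hg
  have hv : ∀ v : Fin n, eccentricity (broom n Δ) v = g (v : ℕ) := by
    intro v
    by_cases hvm : (v:ℕ) ≤ m
    · rw [broom_ecc_path hm2 hvm, hg]
      simp only [if_pos hvm]
      rfl
    · rw [broom_ecc_pendant hm2 h1 (by omega), hg]
      simp only [if_neg hvm]
      rfl
  have key : ∑ v : Fin n, eccentricity (broom n Δ) v
      = (m + 2) * (3 * (m + 2) - 2) / 4 + (m + 1) * (Δ - 2) := by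
    rw [Finset.sum_congr rfl (fun v _ => hv v), Fin.sum_univ_eq_sum_range g n]
    have hsplit : (∑ a ∈ Finset.Ico 0 (m+1), g a) + ∑ a ∈ Finset.Ico (m+1) n, g a
        = ∑ a ∈ Finset.range n, g a := by
      rw [Finset.range_eq_Ico]
      exact Finset.sum_Ico_consecutive _ (Nat.zero_le _) (by omega)
    rw [← hsplit]
    have e1 : ∑ a ∈ Finset.Ico 0 (m+1), g a = ∑ a ∈ Finset.range (m+1), max a (m+1-a) := by
      rw [← Finset.range_eq_Ico]
      refine Finset.sum_congr rfl fun a ha => ?_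
      rw [Finset.mem_range] at ha
      rw [hg]; simp only [if_pos (by omega : a ≤ m)]
    have e2 : ∑ a ∈ Finset.Ico (m+1) n, g a = (n - (m+1)) * (m+1) := by
      calc ∑ a ∈ Finset.Ico (m+1) n, g a = ∑ _a ∈ Finset.Ico (m+1) n, (m+1) :=
            Finset.sum_congr rfl (fun a ha => by
              rw [Finset.mem_Ico] at ha
              show (if a ≤ m then max a (m+1-a) else m+1) = m+1
              rw [if_neg (by omega : ¬ a ≤ m)])
        _ = (n - (m+1)) * (m+1) := by rw [Finset.sum_const, Nat.card_Ico, smul_eq_mul]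
    rw [e1, e2]
    have hS := sum_max_range m
    obtain ⟨k, hk⟩ : ∃ k, Δ = k + 2 := ⟨Δ-2, by omega⟩
    have p1 : (n - (m+1)) * (m+1) = m*k + k + m + 1 := by
      have h' : n - (m+1) = k + 1 := by omega
      rw [h']; ring
    have p2 : (m+1) * (Δ-2) = m*k + k := by
      have h' : Δ - 2 = k := by omega
      rw [h']; ring
    have p0 : 3 * (m+2) - 2 = 3*m+4 := by omega
    have p3 : (m+2) * (3*m+4) = 3*(m*m) + 10*m + 8 := by ring
    rw [p1, p2, p0]
    generalize (m+2) * (3*m+4) = P at p3 ⊢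
    generalize m*m = M at hS p3
    generalize m*k = B
    omega
  unfold avgEcc
  rw [Fintype.card_fin, ← Nat.cast_sum, key]
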